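/- Under the assumptions that f : [0,1]^d → ℝ is M-Lipschitz (ℓ∞ norm), m ≥ 2, the grid is uniform with spacing 1/(m-1), η_𝐢 ∈ [-δ,δ], 2δ + M/(m-1) < 1/2, f̂(x_𝐢) = f(x_𝐢) + η_𝐢, and ĝ(x_𝐢) is the fractional part of f̂(x_𝐢): for each direction j and each multi-index 𝐢 with i_j > 1, D_j f̂(x_𝐢) equals D_j ĝ(x_𝐢) if |D_j ĝ(x_𝐢)| < 1/2, equals 1 + D_j ĝ(x_𝐢) if D_j ĝ(x_𝐢) < -1/2, and equals -1 + D_j ĝ(x_𝐢) if D_j ĝ(x_𝐢) > 1/2. -/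

import Mathlib

theorem stmt9 (d m : ℕ) (hd : 1 ≤ d) (hm : 2 ≤ m)
    (f : (Fin d → ℝ) → ℝ) (M : ℝ) (hM : 0 < M)
    (hf : ∀ x y : Fin d → ℝ, (∀ j, x j ∈ Set.Icc (0:ℝ) 1) → (∀ j, y j ∈ Set.Icc (0:ℝ) 1) →
      |f x - f y| ≤ M * ‖x - y‖)
    (δ : ℝ) (hδ : δ ∈ Set.Icc (0:ℝ) (1/2))
    (η : (Fin d → ℕ) → ℝ) (hη : ∀ i, (∀ j, 1 ≤ i j ∧ i j ≤ m) → |η i| ≤ δ)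
    (hcond : 2 * δ + M / ((m:ℝ) - 1) < 1/2)
    (x : (Fin d → ℕ) → (Fin d → ℝ)) (hx : ∀ i j, x i j = ((i j : ℝ) - 1) / ((m:ℝ) - 1))
    (fh : (Fin d → ℕ) → ℝ) (hfh : ∀ i, fh i = f (x i) + η i)
    (gh : (Fin d → ℕ) → ℝ) (hgh : ∀ i, gh i = Int.fract (fh i)) :
    ∀ i : Fin d → ℕ, (∀ j, 1 ≤ i j ∧ i j ≤ m) → ∀ j : Fin d, 2 ≤ i j →
      (|gh i - gh (Function.update i j (i j - 1))| < 1/2 →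
        fh i - fh (Function.update i j (i j - 1)) = gh i - gh (Function.update i j (i j - 1))) ∧
      (gh i - gh (Function.update i j (i j - 1)) < -(1/2) →
        fh i - fh (Function.update i j (i j - 1)) = 1 + gh i - gh (Function.update i j (i j - 1))) ∧
      (gh i - gh (Function.update i j (i j - 1)) > 1/2 →
        fh i - fh (Function.update i j (i j - 1)) = -1 + gh i - gh (Function.update i j (i j - 1))) := by
  intro i hi j hij
  have hm2 : (2:ℝ) ≤ (m:ℝ) := by exact_mod_cast hm
  have hm0 : (0:ℝ) < (m:ℝ) - 1 := by linarith
  set i' := Function.update i j (i j - 1) with hi'def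
  have hi' : ∀ k, 1 ≤ i' k ∧ i' k ≤ m := by
    intro k
    rcases eq_or_ne k j with rfl | h
    · simp only [hi'def, Function.update_self]
      have := hi k; omega
    · simp only [hi'def, Function.update_of_ne h]; exact hi k
  have hxmem : ∀ (a : Fin d → ℕ), (∀ k, 1 ≤ a k ∧ a k ≤ m) →
      ∀ k, x a k ∈ Set.Icc (0:ℝ) 1 := by
    intro a ha k
    rw [hx]
    have h1 : (1:ℝ) ≤ (a k : ℝ) := by exact_mod_cast (ha k).1
    have h2 : (a k : ℝ) ≤ (m:ℝ) := by exact_mod_cast (ha k).2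
    constructor
    · apply div_nonneg (by linarith) hm0.le
    · rw [div_le_one hm0]; linarith
  have hnorm : ‖x i - x i'‖ ≤ 1 / ((m:ℝ) - 1) := by
    apply (pi_norm_le_iff_of_nonneg (by positivity)).mpr
    intro k
    simp only [Pi.sub_apply, Real.norm_eq_abs]
    rcases eq_or_ne k j with rfl | h
    · have hc : ((i k - 1 : ℕ) : ℝ) = (i k : ℝ) - 1 := by
        have h1 : 1 ≤ i k := by omega
        push_cast [Nat.cast_sub h1]; ring
      have : x i k - x i' k = 1 / ((m:ℝ) - 1) := by
        simp only [hx, hi'def, Function.update_self, hc]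
        field_simp
        ring
      rw [this, abs_of_nonneg (by positivity)]
    · have : x i k - x i' k = 0 := by
        simp only [hx, hi'def, Function.update_of_ne h]; ring
      rw [this, abs_zero]; positivity
  have hfb : |fh i - fh i'| < 1/2 := by
    have hfij := hf (x i) (x i') (hxmem i hi) (hxmem i' hi')
    have hηi := abs_le.mp (hη i hi)
    have hηi' := abs_le.mp (hη i' hi')
    have hMn : M * ‖x i - x i'‖ ≤ M / ((m:ℝ)-1) := by
      have := mul_le_mul_of_nonneg_left hnorm hM.le
      rw [mul_one_div] at this
      exact this
    have hff := abs_le.mp (hfij.trans hMn)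
    rw [hfh, hfh]
    rw [abs_lt]
    constructor <;> [skip; skip] <;>
    · have := hηi.1; have := hηi.2; have := hηi'.1; have := hηi'.2
      have := hff.1; have := hff.2
      nlinarith [hfij, hMn]
  have hkeq : fh i - fh i' = gh i - gh i' + ((⌊fh i⌋ - ⌊fh i'⌋ : ℤ) : ℝ) := by
    rw [hgh, hgh]
    simp only [Int.fract]
    push_cast
    ring
  set k : ℤ := ⌊fh i⌋ - ⌊fh i'⌋ with hk
  have hg0 : 0 ≤ gh i := by rw [hgh]; exact Int.fract_nonneg _
  have hg1 : gh i < 1 := by rw [hgh]; exact Int.fract_lt_one _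
  have hg0' : 0 ≤ gh i' := by rw [hgh]; exact Int.fract_nonneg _
  have hg1' : gh i' < 1 := by rw [hgh]; exact Int.fract_lt_one _
  have habs := abs_lt.mp hfb
  refine ⟨?_, ?_, ?_⟩
  · intro h
    have hab := abs_lt.mp h
    have h1 : (k:ℝ) < 1 := by rw [hkeq] at habs; linarith [habs.2, hab.1]
    have h2 : (-1:ℝ) < (k:ℝ) := by rw [hkeq] at habs; linarith [habs.1, hab.2]
    have hk0 : k = 0 := by
      have ha : k < 1 := by exact_mod_cast h1
      have hb : (-1:ℤ) < k := by exact_mod_cast h2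
      omega
    rw [hkeq, hk0]; push_cast; ring
  · intro h
    have h1 : (k:ℝ) < 2 := by rw [hkeq] at habs; linarith [habs.2]
    have h2 : (0:ℝ) < (k:ℝ) := by rw [hkeq] at habs; linarith [habs.1]
    have hk0 : k = 1 := by
      have ha : k < 2 := by exact_mod_cast h1
      have hb : (0:ℤ) < k := by exact_mod_cast h2
      omega
    rw [hkeq, hk0]; push_cast; ring
  · intro h
    have h1 : (k:ℝ) < 0 := by rw [hkeq] at habs; linarith [habs.2]
    have h2 : (-2:ℝ) < (k:ℝ) := by rw [hkeq] at habs; linarith [habs.1]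
    have hk0 : k = -1 := by
      have ha : k < 0 := by exact_mod_cast h1
      have hb : (-2:ℤ) < k := by exact_mod_cast h2
      omega
    rw [hkeq, hk0]; push_cast; ring
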